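/- Let M be a complete Riemannian manifold and F : M → ℝ a C² function with α‖v‖² ≤ Hess F(v,v) ≤ β‖v‖² for all v, with 0 < α ≤ β, and unique minimizer x*. Then for every x ∈ M: ‖grad F(x)‖² ≥ α(1 + α/β)(F(x) − F(x*)). -/

import Mathlib

open scoped RealInnerProductSpace

lemma aux_taylor (f : ℝ → ℝ) (hf : ContDiff ℝ 2 f) (c : ℝ)
    (hc : ∀ t, c ≤ deriv (deriv f) t) :
    f 0 + deriv f 0 + c / 2 ≤ f 1 := by
  have hdf : Differentiable ℝ f := hf.differentiable (by norm_num)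
  have hdf1 : ContDiff ℝ 1 (deriv f) := by
    have : ContDiff ℝ (1 + 1) f := by norm_num; exact hf
    exact (contDiff_succ_iff_deriv.mp this).2.2
  have hdf' : Differentiable ℝ (deriv f) := hdf1.differentiable (by norm_num)
  set h' : ℝ → ℝ := fun t => deriv f t - deriv f 0 - c * t with hh'
  have Hh : ∀ t, HasDerivAt (fun t => f t - f 0 - deriv f 0 * t - c / 2 * t ^ 2) (h' t) t := by
    intro t
    have h1 := (hdf t).hasDerivAt
    have h2 : HasDerivAt (fun t : ℝ => deriv f 0 * t) (deriv f 0) t := by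
      simpa using (hasDerivAt_id t).const_mul (deriv f 0)
    have h3 : HasDerivAt (fun t : ℝ => c / 2 * t ^ 2) (c * t) t := by
      have := (hasDerivAt_pow 2 t).const_mul (c / 2)
      simpa using this.congr_deriv (by ring)
    simpa [hh', Pi.sub_def] using ((h1.sub_const (f 0)).sub h2).sub h3
  have Hh' : ∀ t, HasDerivAt h' (deriv (deriv f) t - c) t := by
    intro t
    have h1 := (hdf' t).hasDerivAt
    have h2 : HasDerivAt (fun t : ℝ => c * t) c t := by
      simpa using (hasDerivAt_id t).const_mul c
    simpa [hh', Pi.sub_def] using (h1.sub_const (deriv f 0)).sub h2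
  have hmono' : Monotone h' := by
    apply monotone_of_deriv_nonneg (fun t => (Hh' t).differentiableAt)
    intro t
    rw [(Hh' t).deriv]
    linarith [hc t]
  have h'0 : h' 0 = 0 := by simp [hh']
  have hnn : ∀ t, 0 ≤ t → 0 ≤ h' t := fun t ht => h'0 ▸ hmono' ht
  have hmono : MonotoneOn (fun t => f t - f 0 - deriv f 0 * t - c / 2 * t ^ 2) (Set.Icc 0 1) := by
    apply monotoneOn_of_deriv_nonneg (convex_Icc 0 1)
    · exact fun t _ => ((Hh t).differentiableAt).continuousAt.continuousWithinAt
    · exact fun t _ => ((Hh t).differentiableAt).differentiableWithinAt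
    · intro t ht
      rw [(Hh t).deriv]
      rw [interior_Icc] at ht
      exact hnn t ht.1.le
  have := hmono (Set.mem_Icc.mpr ⟨le_refl 0, by norm_num⟩)
      (Set.mem_Icc.mpr ⟨by norm_num, le_refl 1⟩) (by norm_num)
  simp only at this
  nlinarith [this]

/-- A packaging of the data of a complete Riemannian manifold `M` needed to state
gradient-descent results: tangent spaces realized as subspaces of an ambient Hilbert
space `V` (as provided, e.g., by the Nash embedding theorem), an exponential map, and
the existence of minimizing geodesics (Hopf–Rinow). The curve `t ↦ exp x (t • v)`,
`v ∈ tangent x`, is the geodesic through `x` with velocity `v`, and the distance on `M`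
is the Riemannian distance. -/
structure RiemannianData (M : Type*) (V : Type*) [MetricSpace M]
    [NormedAddCommGroup V] [InnerProductSpace ℝ V] where
  /-- the tangent space at each point -/
  tangent : M → Submodule ℝ V
  /-- the Riemannian exponential map -/
  exp : M → V → M
  exp_zero : ∀ x, exp x 0 = x
  /-- geodesics emanating from a point do not increase distance faster than their speed -/
  dist_exp_le : ∀ x, ∀ v ∈ tangent x, dist x (exp x v) ≤ ‖v‖
  /-- Hopf–Rinow: any two points are joined by a minimizing geodesic -/
  minimizing : ∀ x y : M, ∃ v ∈ tangent x, exp x v = y ∧ ‖v‖ = dist x y ∧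
    ∀ s t : ℝ, s ∈ Set.Icc (0:ℝ) 1 → t ∈ Set.Icc (0:ℝ) 1 →
      dist (exp x (s • v)) (exp x (t • v)) = |s - t| * ‖v‖

/-- Riemannian Polyak–Łojasiewicz inequality: under the two-sided
Hessian bound with `0 < α ≤ β` and unique minimizer `x*`, one has
`‖grad F(x)‖² ≥ α(1 + α/β)(F(x) - F(x*))` for every `x`. -/
theorem stmt11 {M V : Type*} [MetricSpace M] [CompleteSpace M]
    [NormedAddCommGroup V] [InnerProductSpace ℝ V]
    (D : RiemannianData M V) (F : M → ℝ)
    (hC2 : ∀ x : M, ∀ v ∈ D.tangent x, ContDiff ℝ 2 (fun s : ℝ => F (D.exp x (s • v))))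
    (gradF : M → V) (hgrad_mem : ∀ x, gradF x ∈ D.tangent x)
    (hgrad : ∀ x : M, ∀ v ∈ D.tangent x,
      deriv (fun s : ℝ => F (D.exp x (s • v))) 0 = ⟪gradF x, v⟫)
    (α β : ℝ) (hα : 0 < α) (hαβ : α ≤ β)
    (hHess : ∀ x : M, ∀ v ∈ D.tangent x, ∀ t : ℝ,
      α * ‖v‖ ^ 2 ≤ deriv (deriv (fun s : ℝ => F (D.exp x (s • v)))) t ∧
      deriv (deriv (fun s : ℝ => F (D.exp x (s • v)))) t ≤ β * ‖v‖ ^ 2)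
    (xstar : M) (hmin : ∀ y, F xstar ≤ F y)
    (huniq : ∀ y, (∀ z, F y ≤ F z) → y = xstar) :
    ∀ x : M, ‖gradF x‖ ^ 2 ≥ α * (1 + α / β) * (F x - F xstar) := by
  intro x
  obtain ⟨v, hv, hexp, hnorm, -⟩ := D.minimizing x xstar
  set g : ℝ → ℝ := fun s => F (D.exp x (s • v)) with hg
  have hg0 : g 0 = F x := by simp [hg, D.exp_zero]
  have hg1 : g 1 = F xstar := by simp [hg, hexp]
  have hgd : deriv g 0 = ⟪gradF x, v⟫ := hgrad x v hv
  have key : g 0 + deriv g 0 + α * ‖v‖ ^ 2 / 2 ≤ g 1 :=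
    aux_taylor g (hC2 x v hv) (α * ‖v‖ ^ 2) (fun t => (hHess x v hv t).1)
  have hinner : -⟪gradF x, v⟫ ≤ ‖gradF x‖ * ‖v‖ := by
    have := abs_real_inner_le_norm (gradF x) v
    have := neg_abs_le (⟪gradF x, v⟫)
    linarith
  have hd : F x - F xstar ≤ ‖gradF x‖ * ‖v‖ - α * ‖v‖ ^ 2 / 2 := by
    rw [hg0, hg1, hgd] at key
    linarith
  have h2a : 2 * α * (F x - F xstar) ≤ ‖gradF x‖ ^ 2 := by
    nlinarith [sq_nonneg (‖gradF x‖ - α * ‖v‖), sq_nonneg ‖v‖, norm_nonneg (gradF x),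
      norm_nonneg v]
  have hpos : 0 ≤ F x - F xstar := by linarith [hmin x]
  have hβ : 0 < β := lt_of_lt_of_le hα hαβ
  have hab : α / β ≤ 1 := (div_le_one hβ).mpr hαβ
  have h5 : α * (1 + α / β) ≤ 2 * α := by nlinarith
  calc α * (1 + α / β) * (F x - F xstar) ≤ 2 * α * (F x - F xstar) :=
        mul_le_mul_of_nonneg_right h5 hpos
    _ ≤ ‖gradF x‖ ^ 2 := h2a
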